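/- Let $G = \langle a, b \mid a^2 b = b a^2 \rangle$, let $f \colon G \to \mathbb{Z}/2\mathbb{Z}$ be the homomorphism with $f(a) = 0$ and $f(b) = 1$, and let $H = \ker f$. Let $\chi \colon H \to \mathbb{Z}/2\mathbb{Z}$ be the homomorphism obtained by composing the map $H \to U_3(\mathbb{F}_2)$ (induced by $a \mapsto \sigma_1$, $b \mapsto \sigma_2$) with the $(1,3)$ coordinate function. Then $\chi$ does not lift to a homomorphism $H \to \mathbb{Z}/4\mathbb{Z}$; that is, there is no homomorphism $\widetilde\chi \colon H \to \mathbb{Z}/4\mathbb{Z}$ whose composition with the reduction $\mathbb{Z}/4\mathbb{Z} \to \mathbb{Z}/2\mathbb{Z}$ equals $\chi$. -/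

import Mathlib

/-- The single relation `a² b (b a²)⁻¹` defining `G = ⟨a, b ∣ a²b = ba²⟩`,
with `a = of true`, `b = of false`. -/
def grpRels : Set (FreeGroup Bool) :=
  {FreeGroup.of true ^ 2 * FreeGroup.of false *
    (FreeGroup.of false * FreeGroup.of true ^ 2)⁻¹}

/-- `σ₁ ∈ U₃(𝔽₂)`: single off-diagonal `1` in position `(1,2)`. -/
def sigma1 : (Matrix (Fin 3) (Fin 3) (ZMod 2))ˣ :=
  ⟨!![1,1,0; 0,1,0; 0,0,1], !![1,1,0; 0,1,0; 0,0,1], by decide, by decide⟩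

/-- `σ₂ ∈ U₃(𝔽₂)`: single off-diagonal `1` in position `(2,3)`. -/
def sigma2 : (Matrix (Fin 3) (Fin 3) (ZMod 2))ˣ :=
  ⟨!![1,0,0; 0,1,1; 0,0,1], !![1,0,0; 0,1,1; 0,0,1], by decide, by decide⟩

/-- Let `G = ⟨a, b ∣ a²b = ba²⟩`, let `f : G → ℤ/2ℤ` be the homomorphism
with `f a = 0`, `f b = 1`, and `H = ker f`. Let `φ : G → U₃(𝔽₂)` be the homomorphism
with `φ a = σ₁`, `φ b = σ₂`, and let `χ : H → ℤ/2ℤ` be `h ↦ (φ h)₁₃`. Then `χ` admits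
no lift to a homomorphism `H → ℤ/4ℤ` along the reduction `ℤ/4ℤ → ℤ/2ℤ`. -/
theorem stmt6
    (φ : PresentedGroup grpRels →* (Matrix (Fin 3) (Fin 3) (ZMod 2))ˣ)
    (hφa : φ (PresentedGroup.of true) = sigma1)
    (hφb : φ (PresentedGroup.of false) = sigma2)
    (f : PresentedGroup grpRels →* Multiplicative (ZMod 2))
    (hfa : f (PresentedGroup.of true) = Multiplicative.ofAdd (0 : ZMod 2))
    (hfb : f (PresentedGroup.of false) = Multiplicative.ofAdd (1 : ZMod 2)) :
    ¬ ∃ χ' : ↥f.ker →* Multiplicative (ZMod 4),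
        ∀ h : ↥f.ker,
          ZMod.castHom (by norm_num : (2 : ℕ) ∣ 4) (ZMod 2)
              (Multiplicative.toAdd (χ' h)) =
            (φ (h : PresentedGroup grpRels)).val 0 2 := by
  rintro ⟨χ', hχ⟩
  set a : PresentedGroup grpRels := PresentedGroup.of true with ha_def
  set b : PresentedGroup grpRels := PresentedGroup.of false with hb_def
  have hfa1 : f a = 1 := by rw [hfa]; rfl
  have haker : a ∈ f.ker := hfa1
  have hcker : (b * a * b⁻¹) ∈ f.ker := by
    simp [MonoidHom.mem_ker, map_mul, map_inv, hfa1]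
  -- the relation in the presented group
  have hrel : a ^ 2 * b = b * a ^ 2 := by
    have h1 : (QuotientGroup.mk (FreeGroup.of true ^ 2 * FreeGroup.of false *
        (FreeGroup.of false * FreeGroup.of true ^ 2)⁻¹) :
        PresentedGroup grpRels) = 1 := by
      apply (QuotientGroup.eq_one_iff _).mpr
      exact Subgroup.subset_normalClosure rfl
    have h2 : a ^ 2 * b * (b * a ^ 2)⁻¹ = 1 := by
      simp at h1; exact h1
    exact mul_inv_eq_one.mp h2
  have h3 : b * a ^ 2 * b⁻¹ = a ^ 2 := by
    rw [← hrel]; group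
  have hc2 : (b * a * b⁻¹) ^ 2 = a ^ 2 := by
    rw [← h3, sq, sq]; group
  -- elements of the kernel
  set aa : ↥f.ker := ⟨a, haker⟩ with haa
  set cc : ↥f.ker := ⟨b * a * b⁻¹, hcker⟩ with hcc
  have hsq : aa ^ 2 = cc ^ 2 := by
    ext
    push_cast
    rw [hc2]
  -- χ values
  have hva : ZMod.castHom (by norm_num : (2 : ℕ) ∣ 4) (ZMod 2)
      (Multiplicative.toAdd (χ' aa)) = 0 := by
    have := hχ aa
    rwa [show ((aa : PresentedGroup grpRels)) = a from rfl, hφa,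
      show sigma1.val 0 2 = 0 from rfl] at this
  have hvc : ZMod.castHom (by norm_num : (2 : ℕ) ∣ 4) (ZMod 2)
      (Multiplicative.toAdd (χ' cc)) = 1 := by
    have := hχ cc
    rwa [show ((cc : PresentedGroup grpRels)) = b * a * b⁻¹ from rfl,
      map_mul, map_mul, map_inv, hφa, hφb,
      show ((sigma2 * sigma1 * sigma2⁻¹ :
        (Matrix (Fin 3) (Fin 3) (ZMod 2))ˣ)).val 0 2 = 1 from by decide] at this
  -- contradiction
  have hadd : Multiplicative.toAdd (χ' aa) + Multiplicative.toAdd (χ' aa)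
      = Multiplicative.toAdd (χ' cc) + Multiplicative.toAdd (χ' cc) := by
    have := congrArg (fun x => Multiplicative.toAdd (χ' x)) hsq
    simpa [map_pow, sq, toAdd_mul] using this
  revert hadd hva hvc
  generalize Multiplicative.toAdd (χ' aa) = x
  generalize Multiplicative.toAdd (χ' cc) = y
  revert x y
  decide
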